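/- Let q ≥ 4 be even and let A, B be skew-symmetric q×q complex matrices such that A has rank q-2 and the restriction of the bilinear form B to ker A is nondegenerate. Then μ = 0 is a root of multiplicity exactly 1 of the Pfaffian Pf(λA + μB) viewed as a homogeneous polynomial in (λ,μ). -/

import Mathlib

open MvPolynomial Matrix

/-- Key analytic fact: the coefficient of `μ²` in `det (A + μ B)` is nonzero. -/
lemma key3 (q : ℕ) (hq4 : 4 ≤ q)
    (A B : Matrix (Fin q) (Fin q) ℂ)
    (hA : Aᵀ = -A) (hB : Bᵀ = -B)
    (hker : Module.finrank ℂ (LinearMap.ker A.mulVecLin) = 2)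
    (hnd : ∀ v : Fin q → ℂ, A.mulVec v = 0 → v ≠ 0 →
      ∃ w : Fin q → ℂ, A.mulVec w = 0 ∧ dotProduct v (B.mulVec w) ≠ 0) :
    (Matrix.det (Matrix.of fun i j : Fin q =>
      Polynomial.C (A i j) + Polynomial.X * Polynomial.C (B i j))).coeff 2 ≠ 0 := by
  classical
  set K := LinearMap.ker A.mulVecLin with hK
  set m := q - 2 with hm
  have hmq : m + 2 = q := by omega
  obtain ⟨W, hWc⟩ := Submodule.exists_isCompl K
  have hWdim : Module.finrank ℂ W = m := by
    have h := Submodule.finrank_add_eq_of_isCompl hWc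
    rw [Module.finrank_fin_fun] at h
    omega
  let bW : Module.Basis (Fin m) ℂ W := Module.finBasisOfFinrankEq ℂ W hWdim
  let bK : Module.Basis (Fin 2) ℂ K := Module.finBasisOfFinrankEq ℂ K hker
  let e : Module.Basis (Fin m ⊕ Fin 2) ℂ (Fin q → ℂ) :=
    (bW.prod bK).map (Submodule.prodEquivOfIsCompl W K hWc.symm)
  have heinl : ∀ i, (e (Sum.inl i)) = (bW i : Fin q → ℂ) := by
    intro i
    simp [e, Module.Basis.prod_apply, Submodule.coe_prodEquivOfIsCompl']
  have heinr : ∀ i, (e (Sum.inr i)) = (bK i : Fin q → ℂ) := by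
    intro i
    simp [e, Module.Basis.prod_apply, Submodule.coe_prodEquivOfIsCompl']
  let τ : (Fin m ⊕ Fin 2) ≃ Fin q := finSumFinEquiv.trans (finCongr hmq)
  let b0 : Module.Basis (Fin m ⊕ Fin 2) ℂ (Fin q → ℂ) := (Pi.basisFun ℂ (Fin q)).reindex τ.symm
  set P : Matrix (Fin m ⊕ Fin 2) (Fin m ⊕ Fin 2) ℂ := b0.toMatrix e with hP
  set P' : Matrix (Fin m ⊕ Fin 2) (Fin m ⊕ Fin 2) ℂ := e.toMatrix b0 with hP'
  have hPij : ∀ i j, P i j = e j (τ i) := by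
    intro i j
    simp [hP, b0, Module.Basis.toMatrix_apply]
  have hPP' : P * P' = 1 := b0.toMatrix_mul_toMatrix_flip e
  have hP'P : P' * P = 1 := e.toMatrix_mul_toMatrix_flip b0
  have hPdet : P.det * P'.det = 1 := by rw [← Matrix.det_mul, hPP', Matrix.det_one]
  -- the conjugated bilinear-form matrices
  have hhat : ∀ (M : Matrix (Fin q) (Fin q) ℂ) (i j),
      (Pᵀ * M.submatrix τ τ * P) i j = dotProduct (e i) (M.mulVec (e j)) := by
    intro M i j
    rw [Matrix.mul_assoc, Matrix.mul_apply, dotProduct,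
      ← Equiv.sum_comp τ (fun x => e i x * (M.mulVec (e j)) x)]
    refine Finset.sum_congr rfl fun k _ => ?_
    rw [Matrix.transpose_apply, hPij, Matrix.mul_apply]
    congr 1
    show _ = (M.mulVec (e j)) (τ k)
    rw [Matrix.mulVec, dotProduct,
      ← Equiv.sum_comp τ (fun y => M (τ k) y * e j y)]
    refine Finset.sum_congr rfl fun l _ => ?_
    rw [Matrix.submatrix_apply, hPij]
  set Ah : Matrix (Fin m ⊕ Fin 2) (Fin m ⊕ Fin 2) ℂ := Pᵀ * A.submatrix τ τ * P with hAh
  set Bh : Matrix (Fin m ⊕ Fin 2) (Fin m ⊕ Fin 2) ℂ := Pᵀ * B.submatrix τ τ * P with hBh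
  have hKe : ∀ i, A.mulVec (e (Sum.inr i)) = 0 := by
    intro i
    have h : A.mulVecLin ((bK i : Fin q → ℂ)) = 0 := LinearMap.mem_ker.mp (bK i).2
    rw [Matrix.mulVecLin_apply] at h
    rw [heinr i]
    exact h
  have hskewdot : ∀ (M : Matrix (Fin q) (Fin q) ℂ), Mᵀ = -M → ∀ v w : Fin q → ℂ,
      dotProduct v (M.mulVec w) = -(dotProduct w (M.mulVec v)) := by
    intro M hM v w
    rw [dotProduct_mulVec, ← Matrix.mulVec_transpose, hM, Matrix.neg_mulVec,
      neg_dotProduct, dotProduct_comm]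
  have hrow : ∀ r j, Ah (Sum.inr r) j = 0 := by
    intro r j
    rw [hAh, hhat, hskewdot A hA, hKe]
    simp
  have hcol : ∀ i r, Ah i (Sum.inr r) = 0 := by
    intro i r
    rw [hAh, hhat, hKe]
    simp
  -- blocks
  set A11 : Matrix (Fin m) (Fin m) ℂ := Matrix.of fun i j => Ah (Sum.inl i) (Sum.inl j) with hA11
  set B11 : Matrix (Fin m) (Fin m) ℂ := Matrix.of fun i j => Bh (Sum.inl i) (Sum.inl j) with hB11
  set B12 : Matrix (Fin m) (Fin 2) ℂ := Matrix.of fun i j => Bh (Sum.inl i) (Sum.inr j) with hB12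
  set B21 : Matrix (Fin 2) (Fin m) ℂ := Matrix.of fun i j => Bh (Sum.inr i) (Sum.inl j) with hB21
  set B22 : Matrix (Fin 2) (Fin 2) ℂ := Matrix.of fun i j => Bh (Sum.inr i) (Sum.inr j) with hB22
  have hAblocks : Ah = Matrix.fromBlocks A11 0 0 0 := by
    ext i j
    cases i with
    | inl i => cases j with
      | inl j => simp [hA11]
      | inr j => simp [hcol]
    | inr i => cases j with
      | inl j => simp [hrow]
      | inr j => simp [hrow]
  have hBblocks : Bh = Matrix.fromBlocks B11 B12 B21 B22 := by
    ext i j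
    cases i with
    | inl i => cases j with
      | inl j => simp [hB11]
      | inr j => simp [hB12]
    | inr i => cases j with
      | inl j => simp [hB21]
      | inr j => simp [hB22]
  -- det A11 ≠ 0
  have hA11det : A11.det ≠ 0 := by
    intro h0
    obtain ⟨v, hv0, hv⟩ := (Matrix.exists_mulVec_eq_zero_iff).mpr h0
    set vh : (Fin m ⊕ Fin 2) → ℂ := Sum.elim v 0 with hvh
    have hAhv : Ah.mulVec vh = 0 := by
      rw [hAblocks, hvh, Matrix.fromBlocks_mulVec]
      simp [hv]
    set w : Fin q → ℂ := (P.mulVec vh) ∘ τ.symm with hw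
    have hAw : A.mulVec w = 0 := by
      have h1 : (A.submatrix τ τ).mulVec (P.mulVec vh) = 0 := by
        have h2 : P'ᵀ * Pᵀ = 1 := by
          rw [← Matrix.transpose_mul, hPP', Matrix.transpose_one]
        have h3 := congrArg (fun z => P'ᵀ.mulVec z) hAhv
        simp only [hAh] at h3
        rw [← Matrix.mulVec_mulVec, ← Matrix.mulVec_mulVec] at h3
        rw [Matrix.mulVec_mulVec, h2, Matrix.one_mulVec] at h3
        simpa using h3
      rw [Matrix.submatrix_mulVec_equiv A (P.mulVec vh) τ τ] at h1
      funext x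
      have := congrFun h1 (τ.symm x)
      simpa [hw, Function.comp] using this
    -- w lies in W
    have hwcoe : w = ((∑ j, v j • bW j : W) : Fin q → ℂ) := by
      funext x
      rw [hw]
      show (P.mulVec vh) (τ.symm x) = _
      rw [Matrix.mulVec, dotProduct]
      simp only [hPij, Equiv.apply_symm_apply]
      rw [Fintype.sum_sum_type]
      simp only [hvh, Sum.elim_inl, Sum.elim_inr, Pi.zero_apply, mul_zero,
        Finset.sum_const_zero, add_zero]
      rw [Submodule.coe_sum, Finset.sum_apply]
      refine Finset.sum_congr rfl fun j _ => ?_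
      rw [heinl j, SetLike.val_smul, Pi.smul_apply, smul_eq_mul, mul_comm]
    have hwW : w ∈ W := by
      rw [hwcoe]
      exact SetLike.coe_mem _
    have hwK : w ∈ K := LinearMap.mem_ker.mpr (by rw [Matrix.mulVecLin_apply]; exact hAw)
    have hw0 : w = 0 := Submodule.disjoint_def.mp hWc.disjoint w hwK hwW
    have hsum0 : (∑ j, v j • bW j : W) = 0 := by
      have h5 := hwcoe.symm.trans hw0
      exact Subtype.coe_injective (by simpa using h5)
    have hv00 : v = 0 := by
      have hli := Fintype.linearIndependent_iff.mp bW.linearIndependent v hsum0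
      funext j; exact hli j
    exact hv0 hv00
  -- det B22 ≠ 0
  have hdiagzero : ∀ v : Fin q → ℂ, dotProduct v (B.mulVec v) = 0 := by
    intro v
    have h := hskewdot B hB v v
    have h2 : dotProduct v (B.mulVec v) + dotProduct v (B.mulVec v) = 0 := by
      linear_combination h
    exact add_self_eq_zero.mp h2
  have hc : dotProduct (e (Sum.inr 0)) (B.mulVec (e (Sum.inr 1))) ≠ 0 := by
    intro hc0
    obtain ⟨w, hw1, hw2⟩ := hnd (e (Sum.inr 0)) (hKe 0) (e.ne_zero _)
    have hwK : w ∈ K := LinearMap.mem_ker.mpr (by rw [Matrix.mulVecLin_apply]; exact hw1)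
    set wK : K := ⟨w, hwK⟩ with hwKdef
    have hrepr := bK.sum_repr wK
    have hwrep : w = (bK.repr wK 0) • e (Sum.inr 0) + (bK.repr wK 1) • e (Sum.inr 1) := by
      have h6 := congrArg (fun z : K => (z : Fin q → ℂ)) hrepr
      simp only [Submodule.coe_sum, Fin.sum_univ_two, SetLike.val_smul] at h6
      rw [heinr 0, heinr 1]
      exact h6.symm
    apply hw2
    rw [hwrep, Matrix.mulVec_add, Matrix.mulVec_smul, Matrix.mulVec_smul,
      dotProduct_add, dotProduct_smul, dotProduct_smul,
      hdiagzero, hc0]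
    simp
  have hB22det : B22.det ≠ 0 := by
    have h00 : B22 0 0 = 0 := by
      rw [hB22]
      show Bh (Sum.inr 0) (Sum.inr 0) = 0
      rw [hBh, hhat]
      exact hdiagzero _
    have h11 : B22 1 1 = 0 := by
      rw [hB22]
      show Bh (Sum.inr 1) (Sum.inr 1) = 0
      rw [hBh, hhat]
      exact hdiagzero _
    have h10 : B22 1 0 = -(B22 0 1) := by
      rw [hB22]
      show Bh (Sum.inr 1) (Sum.inr 0) = -(Bh (Sum.inr 0) (Sum.inr 1))
      rw [hBh, hhat, hhat]
      exact hskewdot B hB _ _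
    have h01 : B22 0 1 = dotProduct (e (Sum.inr 0)) (B.mulVec (e (Sum.inr 1))) := by
      rw [hB22]
      show Bh (Sum.inr 0) (Sum.inr 1) = _
      rw [hBh, hhat]
    rw [Matrix.det_fin_two, h00, h11, h10, h01]
    simp only [zero_mul, mul_neg, sub_neg_eq_add, zero_add]
    exact mul_ne_zero hc hc
  -- now the polynomial computation
  set M0 : Matrix (Fin q) (Fin q) (Polynomial ℂ) :=
    Matrix.of fun i j : Fin q => Polynomial.C (A i j) + Polynomial.X * Polynomial.C (B i j)
    with hM0
  have hdet0 : M0.det = (M0.submatrix τ τ).det := (Matrix.det_submatrix_equiv_self τ M0).symm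
  have hMτ : M0.submatrix τ τ
      = (A.submatrix τ τ).map Polynomial.C
        + (Polynomial.X : Polynomial ℂ) • (B.submatrix τ τ).map Polynomial.C := by
    ext i j
    simp [hM0, Matrix.submatrix_apply, Matrix.map_apply, Matrix.smul_apply, smul_eq_mul]
  set Pp : Matrix (Fin m ⊕ Fin 2) (Fin m ⊕ Fin 2) (Polynomial ℂ) := P.map Polynomial.C with hPp
  have hdetPp : Pp.det = Polynomial.C P.det := by
    rw [hPp, ← RingHom.mapMatrix_apply, ← RingHom.map_det]
  have hconj : Ppᵀ * (M0.submatrix τ τ) * Pp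
      = (Ah.map Polynomial.C) + (Polynomial.X : Polynomial ℂ) • (Bh.map Polynomial.C) := by
    rw [hMτ, Matrix.mul_add, Matrix.add_mul, Matrix.mul_smul, Matrix.smul_mul]
    congr 1
    · rw [hAh, hPp, ← Matrix.transpose_map, ← Matrix.map_mul, ← Matrix.map_mul]
    · rw [hBh, hPp, ← Matrix.transpose_map, ← Matrix.map_mul, ← Matrix.map_mul]
  have hAhmap : Ah.map Polynomial.C
      = Matrix.fromBlocks (A11.map Polynomial.C) 0 0 0 := by
    rw [hAblocks, Matrix.fromBlocks_map]
    congr 1 <;> ext i j <;> simp [Matrix.map_apply]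
  have hBhmap : Bh.map Polynomial.C
      = Matrix.fromBlocks (B11.map Polynomial.C) (B12.map Polynomial.C)
          (B21.map Polynomial.C) (B22.map Polynomial.C) := by
    rw [hBblocks, Matrix.fromBlocks_map]
  set N : Matrix (Fin m ⊕ Fin 2) (Fin m ⊕ Fin 2) (Polynomial ℂ) :=
    Matrix.fromBlocks (A11.map Polynomial.C + (Polynomial.X : Polynomial ℂ) • B11.map Polynomial.C)
      ((Polynomial.X : Polynomial ℂ) • B12.map Polynomial.C) (B21.map Polynomial.C)
      (B22.map Polynomial.C) with hN
  have hfact : (Ah.map Polynomial.C) + (Polynomial.X : Polynomial ℂ) • (Bh.map Polynomial.C)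
      = Matrix.fromBlocks 1 0 0
          ((Polynomial.X : Polynomial ℂ) • (1 : Matrix (Fin 2) (Fin 2) (Polynomial ℂ))) * N := by
    rw [hAhmap, hBhmap, Matrix.fromBlocks_smul, Matrix.fromBlocks_add, hN,
      Matrix.fromBlocks_multiply]
    simp [Matrix.smul_mul]
  have hdetfact : Polynomial.C P.det ^ 2 * M0.det = Polynomial.X ^ 2 * N.det := by
    have h1 := congrArg Matrix.det (hconj.trans hfact)
    rw [Matrix.det_mul, Matrix.det_mul, Matrix.det_transpose, hdetPp] at h1
    rw [Matrix.det_mul, Matrix.det_fromBlocks_zero₁₂, Matrix.det_one, Matrix.det_smul,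
      Matrix.det_one] at h1
    rw [hdet0]
    rw [Fintype.card_fin] at h1
    ring_nf
    ring_nf at h1
    linear_combination h1
  have hcoeff : P.det ^ 2 * (M0.det.coeff 2) = N.det.coeff 0 := by
    have h4 := congrArg (fun p : Polynomial ℂ => p.coeff 2) hdetfact
    simp only [← Polynomial.C_pow, Polynomial.coeff_C_mul, Polynomial.coeff_X_pow_mul'] at h4
    simpa using h4
  have hN0 : N.det.coeff 0 = A11.det * B22.det := by
    rw [Polynomial.coeff_zero_eq_eval_zero, ← Polynomial.coe_evalRingHom, RingHom.map_det,
      RingHom.mapMatrix_apply]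
    have h5 : N.map (Polynomial.evalRingHom (0:ℂ)) = Matrix.fromBlocks A11 0 B21 B22 := by
      rw [hN, Matrix.fromBlocks_map]
      ext i j
      cases i <;> cases j <;>
        simp [Matrix.map_apply, Matrix.add_apply, Matrix.smul_apply, smul_eq_mul,
          Function.comp]
    rw [h5, Matrix.det_fromBlocks_zero₁₂]
  intro hzero
  have hfinal := hcoeff.trans hN0
  rw [hzero, mul_zero] at hfinal
  exact mul_ne_zero hA11det hB22det hfinal.symm

/-- Let `q ≥ 4` be even, `A, B` skew-symmetric `q×q` complex matrices with
`rank A = q - 2` and with the bilinear form of `B` nondegenerate on `ker A`.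
Then `μ = 0` is a root of multiplicity exactly `1` of the Pfaffian `Pf(λA+μB)`
(any homogeneous square root of `det (λA+μB)`): `μ` divides `Pf` but `μ²` does not. -/
theorem stmt3 (q : ℕ) (hq4 : 4 ≤ q) (hqe : Even q)
    (A B : Matrix (Fin q) (Fin q) ℂ)
    (hA : Aᵀ = -A) (hB : Bᵀ = -B)
    (hrk : A.rank = q - 2)
    (hnd : ∀ v : Fin q → ℂ, A.mulVec v = 0 → v ≠ 0 →
      ∃ w : Fin q → ℂ, A.mulVec w = 0 ∧ dotProduct v (B.mulVec w) ≠ 0)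
    (Pf : MvPolynomial (Fin 2) ℂ)
    (hPf : Pf ^ 2 = Matrix.det (Matrix.of fun i j : Fin q =>
      X (0 : Fin 2) * MvPolynomial.C (A i j) + X (1 : Fin 2) * MvPolynomial.C (B i j))) :
    (X (1 : Fin 2) ∣ Pf) ∧ ¬ (X (1 : Fin 2) ^ 2 ∣ Pf) := by
  classical
  have hker : Module.finrank ℂ (LinearMap.ker A.mulVecLin) = 2 := by
    have h := LinearMap.finrank_range_add_finrank_ker A.mulVecLin
    rw [Module.finrank_fin_fun] at h
    have h2 : A.rank = Module.finrank ℂ (LinearMap.range A.mulVecLin) := rfl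
    omega
  have hdetA : A.det = 0 := by
    rw [← Matrix.exists_mulVec_eq_zero_iff]
    have hne : LinearMap.ker A.mulVecLin ≠ ⊥ := by
      intro h; rw [h] at hker; simp at hker
    obtain ⟨v, hv, hv0⟩ := Submodule.exists_mem_ne_zero_of_ne_bot hne
    exact ⟨v, hv0, hv⟩
  set Φ : MvPolynomial (Fin 2) ℂ ≃ₐ[ℂ] Polynomial (MvPolynomial (Fin 1) ℂ) :=
    (renameEquiv ℂ (Equiv.swap 0 1)).trans (finSuccEquiv ℂ 1) with hΦ
  have hΦX1 : Φ (X 1) = Polynomial.X := by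
    rw [hΦ, AlgEquiv.trans_apply, renameEquiv_apply, rename_X, Equiv.swap_apply_right,
      finSuccEquiv_X_zero]
  have hΦX0 : Φ (X 0) = Polynomial.C (X 0) := by
    have h1 : (Equiv.swap (0 : Fin 2) 1) 0 = Fin.succ 0 := rfl
    rw [hΦ, AlgEquiv.trans_apply, renameEquiv_apply, rename_X, h1, finSuccEquiv_X_succ]
  have hΦC : ∀ a : ℂ, Φ (MvPolynomial.C a) = Polynomial.C (MvPolynomial.C a) := fun a => by
    rw [← MvPolynomial.algebraMap_eq, AlgEquiv.commutes, Polynomial.algebraMap_apply,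
      MvPolynomial.algebraMap_eq]
  have hQ2 : (Φ Pf) ^ 2 = Matrix.det (Matrix.of fun i j : Fin q =>
        Polynomial.C (MvPolynomial.X (0 : Fin 1) * MvPolynomial.C (A i j))
          + Polynomial.X * Polynomial.C (MvPolynomial.C (B i j))) := by
    rw [← map_pow, hPf, AlgEquiv.map_det, AlgEquiv.mapMatrix_apply]
    congr 1
    ext i j
    simp only [Matrix.map_apply, Matrix.of_apply, map_add, _root_.map_mul, hΦX0, hΦX1, hΦC,
      Polynomial.C_mul]
  have hXQ : Polynomial.X ∣ Φ Pf := by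
    rw [Polynomial.X_dvd_iff, Polynomial.coeff_zero_eq_eval_zero]
    have h0 : (Polynomial.eval 0 (Φ Pf)) ^ 2 = 0 := by
      rw [← Polynomial.eval_pow, hQ2, ← Polynomial.coe_evalRingHom, RingHom.map_det, RingHom.mapMatrix_apply]
      have hm : (Matrix.of fun i j : Fin q =>
        Polynomial.C (MvPolynomial.X (0 : Fin 1) * MvPolynomial.C (A i j))
          + Polynomial.X * Polynomial.C (MvPolynomial.C (B i j))).map
          (Polynomial.evalRingHom (0 : MvPolynomial (Fin 1) ℂ))
          = ((MvPolynomial.X 0 : MvPolynomial (Fin 1) ℂ)) •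
            ((MvPolynomial.C : ℂ →+* MvPolynomial (Fin 1) ℂ).mapMatrix A) := by
        ext i j
        simp [Matrix.map_apply, RingHom.mapMatrix_apply]
      rw [hm, Matrix.det_smul, ← RingHom.map_det, hdetA]
      simp
    exact pow_eq_zero_iff two_ne_zero |>.mp h0
  constructor
  · have h := map_dvd Φ.symm hXQ
    rwa [AlgEquiv.symm_apply_apply, ← hΦX1, AlgEquiv.symm_apply_apply] at h
  · intro h2
    have h4 : Polynomial.X ^ 4 ∣ (Φ Pf) ^ 2 := by
      have h := map_dvd Φ (pow_dvd_pow_of_dvd h2 2)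
      rw [map_pow, map_pow, map_pow, hΦX1, ← pow_mul] at h
      exact h
    rw [hQ2] at h4
    set θ : Polynomial (MvPolynomial (Fin 1) ℂ) →+* Polynomial ℂ :=
      Polynomial.mapRingHom (MvPolynomial.eval (fun _ => (1:ℂ)))
    have hθ := map_dvd θ h4
    rw [map_pow, RingHom.map_det, RingHom.mapMatrix_apply] at hθ
    have hX : θ Polynomial.X = Polynomial.X := Polynomial.map_X _
    have hmat : (Matrix.of fun i j : Fin q =>
        Polynomial.C (MvPolynomial.X (0 : Fin 1) * MvPolynomial.C (A i j))
          + Polynomial.X * Polynomial.C (MvPolynomial.C (B i j))).map θ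
        = Matrix.of fun i j : Fin q =>
          Polynomial.C (A i j) + Polynomial.X * Polynomial.C (B i j) := by
      ext i j
      simp [θ, Matrix.map_apply]
    rw [hX, hmat] at hθ
    obtain ⟨r, hr⟩ := hθ
    have : (Matrix.det (Matrix.of fun i j : Fin q =>
      Polynomial.C (A i j) + Polynomial.X * Polynomial.C (B i j))).coeff 2 = 0 := by
      rw [hr, Polynomial.coeff_X_pow_mul']
      simp
    exact key3 q hq4 A B hA hB hker hnd this
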